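/- Fix d ≥ 1 and λ ∈ W^d. For every n ≥ 0 and every μ ∈ ℤ^d with μ₁ ≥ μ₂ ≥ ⋯ ≥ μ_d ≥ 0 (the closure of W^d), the coefficient of x₁^{μ₁}⋯x_d^{μ_d} in the multivariate Laurent polynomial det( x_i^{λ_j} − x_i^{−λ_j} )_{1≤i,j≤d} · ( Σ_{i=1}^d (x_i + x_i^{−1}) )^n over ℚ equals b_n(λ;μ), the number of Weyl oscillating lattice walks of length n from λ to μ. -/

import Mathlib

open scoped BigOperators

/-- The `d`-dimensional Weyl chamber `W^d = {x ∈ ℤ^d : x₁ > x₂ > ⋯ > x_d > 0}`. -/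
def WeylChamber (d : ℕ) : Set (Fin d → ℤ) :=
  {x | (∀ i j : Fin d, i < j → x j < x i) ∧ ∀ i, 0 < x i}

/-- `q` is obtained from `p` by adding a positive or negative unit coordinate vector. -/
def IsUnitStep {d : ℕ} (p q : Fin d → ℤ) : Prop :=
  ∃ i : Fin d, q = p + Pi.single i 1 ∨ q = p - Pi.single i 1

/-- The number `b_n(λ;μ)` of Weyl oscillating lattice walks of length `n` from `lam`
to `mu`: sequences `lam = p⁰, p¹, …, pⁿ = mu` of points of `W^d` in which each
difference `p^{k+1} - p^k` is a positive or negative unit coordinate vector. -/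
noncomputable def oscWalkCount (d n : ℕ) (lam mu : Fin d → ℤ) : ℕ :=
  Nat.card {p : Fin (n + 1) → (Fin d → ℤ) //
    p 0 = lam ∧ p (Fin.last n) = mu ∧ (∀ k, p k ∈ WeylChamber d) ∧
    ∀ k : Fin n, IsUnitStep (p k.castSucc) (p k.succ)}

/-- The Laurent monomial `x^v` in the ring `ℚ[ℤ^d]` of Laurent polynomials in
`x₁, …, x_d` over `ℚ`. -/
noncomputable def laurentMono (d : ℕ) (v : Fin d → ℤ) : AddMonoidAlgebra ℚ (Fin d → ℤ) :=
  AddMonoidAlgebra.single v 1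

namespace OscAux

open AddMonoidAlgebra

variable {d : ℕ}


variable {d : ℕ}

def dir (d : ℕ) (s : Fin d × Bool) : Fin d → ℤ :=
  if s.2 then Pi.single s.1 1 else -Pi.single s.1 1

lemma dir_apply_self (i : Fin d) (b : Bool) : dir d (i, b) i = if b then 1 else -1 := by
  cases b <;> simp [dir]

lemma dir_apply_ne (i : Fin d) (b : Bool) (k : Fin d) (h : k ≠ i) : dir d (i, b) k = 0 := by
  cases b <;> simp [dir, Pi.single_apply, h]

lemma dir_injective : Function.Injective (dir d) := by
  rintro ⟨i, b⟩ ⟨j, c⟩ h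
  have hij : i = j := by
    by_contra hne
    have h1 := congrFun h i
    rw [dir_apply_self, dir_apply_ne j c i hne] at h1
    cases b <;> simp at h1
  subst hij
  have h1 := congrFun h i
  rw [dir_apply_self, dir_apply_self] at h1
  cases b <;> cases c <;> simp_all

lemma isUnitStep_iff {p q : Fin d → ℤ} : IsUnitStep p q ↔ ∃ s, q = p + dir d s := by
  constructor
  · rintro ⟨i, h | h⟩
    · exact ⟨(i, true), h⟩
    · exact ⟨(i, false), by simpa [dir, sub_eq_add_neg] using h⟩
  · rintro ⟨⟨i, b⟩, h⟩
    cases b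
    · exact ⟨i, Or.inr (by simpa [dir, sub_eq_add_neg] using h)⟩
    · exact ⟨i, Or.inl (by simpa [dir] using h)⟩

def Walks (d n : ℕ) (lam mu : Fin d → ℤ) : Type :=
  {p : Fin (n + 1) → (Fin d → ℤ) //
    p 0 = lam ∧ p (Fin.last n) = mu ∧ (∀ k, p k ∈ WeylChamber d) ∧
    ∀ k : Fin n, IsUnitStep (p k.castSucc) (p k.succ)}

lemma oscWalkCount_eq (n : ℕ) (lam mu : Fin d → ℤ) :
    oscWalkCount d n lam mu = Nat.card (Walks d n lam mu) := rfl

open Classical in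
noncomputable def stepCode (v : Fin d → ℤ) : Option (Fin d × Bool) :=
  if h : ∃ s, dir d s = v then some h.choose else none

lemma stepCode_inj {v v' : Fin d → ℤ} (h : ∃ s, dir d s = v) (h' : ∃ s, dir d s = v')
    (he : stepCode v = stepCode v') : v = v' := by
  classical
  rw [stepCode, dif_pos h, stepCode, dif_pos h'] at he
  have := Option.some_injective _ he
  rw [← h.choose_spec, ← h'.choose_spec, this]

instance walksFinite (n : ℕ) (lam mu : Fin d → ℤ) : Finite (Walks d n lam mu) := by
  apply Finite.of_injective
    (fun p : Walks d n lam mu => fun k : Fin n => stepCode (p.1 k.succ - p.1 k.castSucc))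
  intro p q h
  apply Subtype.ext
  funext j
  induction j using Fin.induction with
  | zero => rw [p.2.1, q.2.1]
  | succ k ih =>
    have hp : ∃ s, dir d s = p.1 k.succ - p.1 k.castSucc := by
      obtain ⟨s, hs⟩ := isUnitStep_iff.1 (p.2.2.2.2 k)
      exact ⟨s, by rw [hs]; ring⟩
    have hq : ∃ s, dir d s = q.1 k.succ - q.1 k.castSucc := by
      obtain ⟨s, hs⟩ := isUnitStep_iff.1 (q.2.2.2.2 k)
      exact ⟨s, by rw [hs]; ring⟩
    have := stepCode_inj hp hq (congrFun h k)
    have h2 : p.1 k.succ = p.1 k.castSucc + (q.1 k.succ - q.1 k.castSucc) := by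
      rw [← this]; ring
    rw [h2, ih]; ring

lemma count_zero {lam : Fin d → ℤ} (hlam : lam ∈ WeylChamber d) (mu : Fin d → ℤ) :
    oscWalkCount d 0 lam mu = if mu = lam then 1 else 0 := by
  rw [oscWalkCount_eq]
  split_ifs with h
  · subst h
    have : Unique (Walks d 0 mu mu) := by
      refine ⟨⟨⟨fun _ => mu, rfl, rfl, fun _ => hlam, fun k => k.elim0⟩⟩, ?_⟩
      rintro ⟨p, h0, -, -, -⟩
      refine Subtype.ext (funext fun j => ?_)
      have hj : j = 0 := Fin.ext (by simpa using Nat.lt_one_iff.mp j.isLt)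
      show p j = mu
      rw [hj, h0]
    exact Nat.card_unique
  · have : IsEmpty (Walks d 0 lam mu) := by
      refine ⟨fun p => h ?_⟩
      have h1 : p.1 (Fin.last 0) = lam := p.2.1
      exact (p.2.2.1.symm.trans h1)
    simp

lemma count_vanish {mu : Fin d → ℤ} (h : mu ∉ WeylChamber d) (n : ℕ) (lam : Fin d → ℤ) :
    oscWalkCount d n lam mu = 0 := by
  rw [oscWalkCount_eq]
  have : IsEmpty (Walks d n lam mu) :=
    ⟨fun p => h (p.2.2.1 ▸ p.2.2.2.1 (Fin.last n))⟩
  simp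


def extendWalk {n : ℕ} {lam mu : Fin d → ℤ} (hmu : mu ∈ WeylChamber d)
    (x : Σ s : Fin d × Bool, Walks d n lam (mu - dir d s)) : Walks d (n + 1) lam mu :=
  ⟨Fin.snoc x.2.1 mu, by
    rw [show (0 : Fin (n + 2)) = Fin.castSucc 0 by simp, Fin.snoc_castSucc]
    exact x.2.2.1, Fin.snoc_last _ _, by
    intro k
    induction k using Fin.lastCases with
    | last => rw [Fin.snoc_last]; exact hmu
    | cast j => rw [Fin.snoc_castSucc]; exact x.2.2.2.2.1 j, by
    intro k
    induction k using Fin.lastCases with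
    | last =>
      rw [Fin.succ_last, Fin.snoc_last, Fin.snoc_castSucc, x.2.2.2.1]
      exact isUnitStep_iff.2 ⟨x.1, (sub_add_cancel mu (dir d x.1)).symm⟩
    | cast j =>
      rw [Fin.succ_castSucc, Fin.snoc_castSucc, Fin.snoc_castSucc]
      exact x.2.2.2.2.2 j⟩

lemma extendWalk_bijective {n : ℕ} {lam mu : Fin d → ℤ} (hmu : mu ∈ WeylChamber d) :
    Function.Bijective (extendWalk (d := d) (n := n) (lam := lam) hmu) := by
  constructor
  · rintro ⟨s, p, hp⟩ ⟨t, q, hq⟩ h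
    have hfun : Fin.snoc p mu = (Fin.snoc q mu : Fin (n + 2) → Fin d → ℤ) :=
      congrArg Subtype.val h
    have hpq : p = q := by
      funext j
      have := congrFun hfun j.castSucc
      rwa [Fin.snoc_castSucc, Fin.snoc_castSucc] at this
    have hst : s = t := by
      apply dir_injective
      have h1 : p (Fin.last n) = mu - dir d s := hp.2.1
      have h2 : q (Fin.last n) = mu - dir d t := hq.2.1
      rw [hpq, h2] at h1
      exact (sub_right_injective h1).symm
    subst hst
    exact congrArg (Sigma.mk s) (Subtype.ext hpq)
  · rintro ⟨q, h0, hl, hch, hst⟩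
    obtain ⟨s, hs⟩ := isUnitStep_iff.1 (hst (Fin.last n))
    refine ⟨⟨s, ⟨fun j => q j.castSucc, ?_, ?_, fun k => hch _, ?_⟩⟩, ?_⟩
    · show q (Fin.castSucc 0) = lam
      rw [Fin.castSucc_zero]; exact h0
    · have : q (Fin.last n).succ = mu := by rw [Fin.succ_last]; exact hl
      rw [this] at hs
      exact (eq_sub_iff_add_eq).2 hs.symm
    · intro j
      have := hst j.castSucc
      rwa [Fin.succ_castSucc] at this
    · apply Subtype.ext
      show Fin.snoc (fun j : Fin (n+1) => q j.castSucc) mu = q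
      funext k
      induction k using Fin.lastCases with
      | last => rw [Fin.snoc_last]; exact hl.symm
      | cast j => rw [Fin.snoc_castSucc]

lemma count_succ {n : ℕ} {lam mu : Fin d → ℤ} (hmu : mu ∈ WeylChamber d) :
    oscWalkCount d (n + 1) lam mu = ∑ s : Fin d × Bool, oscWalkCount d n lam (mu - dir d s) := by
  rw [oscWalkCount_eq, ← Nat.card_eq_of_bijective _ (extendWalk_bijective hmu)]
  letI : ∀ s : Fin d × Bool, Fintype (Walks d n lam (mu - dir d s)) := fun s => Fintype.ofFinite _
  rw [Nat.card_eq_fintype_card, Fintype.card_sigma]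
  exact Finset.sum_congr rfl fun s _ => (Nat.card_eq_fintype_card).symm



lemma pi_single_neg (i : Fin d) (c : ℤ) : (Pi.single i (-c) : Fin d → ℤ) = -Pi.single i c := by
  funext j
  rcases eq_or_ne j i with rfl | h
  · simp
  · simp [Pi.single_apply, h]

noncomputable def Dm (d : ℕ) (lam : Fin d → ℤ) : AddMonoidAlgebra ℚ (Fin d → ℤ) :=
  Matrix.det (Matrix.of fun i j : Fin d =>
    laurentMono d (Pi.single i (lam j)) - laurentMono d (Pi.single i (-lam j)))

noncomputable def Sel (d : ℕ) : AddMonoidAlgebra ℚ (Fin d → ℤ) :=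
  ∑ i : Fin d, (laurentMono d (Pi.single i 1) + laurentMono d (Pi.single i (-1)))

lemma Sel_eq : Sel d = ∑ s : Fin d × Bool, AddMonoidAlgebra.single (dir d s) (1 : ℚ) := by
  rw [Sel, Fintype.sum_prod_type]
  refine Finset.sum_congr rfl fun i _ => ?_
  rw [Fintype.sum_bool]
  show laurentMono d (Pi.single i 1) + laurentMono d (Pi.single i (-1))
      = AddMonoidAlgebra.single (dir d (i, true)) 1 + AddMonoidAlgebra.single (dir d (i, false)) 1
  rw [show dir d (i, true) = Pi.single i 1 from rfl,
    show dir d (i, false) = -Pi.single i 1 from rfl, ← pi_single_neg]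
  rfl

lemma mul_Sel_apply (f : AddMonoidAlgebra ℚ (Fin d → ℤ)) (v : Fin d → ℤ) :
    (f * Sel d).coeff v = ∑ s : Fin d × Bool, f.coeff (v - dir d s) := by
  rw [Sel_eq, Finset.mul_sum, AddMonoidAlgebra.coeff_sum, Finsupp.finset_sum_apply]
  exact Finset.sum_congr rfl fun s _ => by
    simp [sub_eq_add_neg]

noncomputable def Phi (g : (Fin d → ℤ) ≃+ (Fin d → ℤ)) :
    AddMonoidAlgebra ℚ (Fin d → ℤ) ≃ₐ[ℚ] AddMonoidAlgebra ℚ (Fin d → ℤ) :=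
  AddMonoidAlgebra.domCongr ℚ ℚ g

lemma Phi_Sel (g : (Fin d → ℤ) ≃+ (Fin d → ℤ)) (τ : Fin d × Bool ≃ Fin d × Bool)
    (h : ∀ s, g (dir d s) = dir d (τ s)) : Phi g (Sel d) = Sel d := by
  rw [Sel_eq, map_sum]
  have h1 : ∀ s : Fin d × Bool,
      Phi g (AddMonoidAlgebra.single (dir d s) (1 : ℚ))
        = AddMonoidAlgebra.single (dir d (τ s)) (1 : ℚ) := fun s => by
    rw [Phi, AddMonoidAlgebra.domCongr_single, h]
  rw [Finset.sum_congr rfl fun s _ => h1 s]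
  exact Equiv.sum_comp τ (fun s => AddMonoidAlgebra.single (dir d s) (1 : ℚ))

lemma coeff_zero_of_anti {lam : Fin d → ℤ} {n : ℕ} (g : (Fin d → ℤ) ≃+ (Fin d → ℤ))
    (hD : Phi g (Dm d lam) = -Dm d lam) (hS : Phi g (Sel d) = Sel d)
    {v : Fin d → ℤ} (hv : g.symm v = v) :
    (Dm d lam * Sel d ^ n).coeff v = 0 := by
  have h1 : Phi g (Dm d lam * Sel d ^ n) = -(Dm d lam * Sel d ^ n) := by
    rw [map_mul, map_pow, hD, hS, neg_mul]
  have h2 : (Phi g (Dm d lam * Sel d ^ n)).coeff v = (-(Dm d lam * Sel d ^ n)).coeff v := by rw [h1]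
  rw [show (Phi g (Dm d lam * Sel d ^ n)).coeff v
      = (Dm d lam * Sel d ^ n).coeff (g.symm v) by rw [Phi, AddMonoidAlgebra.coeff_domCongr]] at h2
  rw [hv] at h2
  rw [AddMonoidAlgebra.coeff_neg, Finsupp.neg_apply] at h2
  linarith


def permEquiv (σ : Equiv.Perm (Fin d)) : (Fin d → ℤ) ≃+ (Fin d → ℤ) where
  toFun x := x ∘ σ
  invFun x := x ∘ σ.symm
  left_inv x := by funext j; simp
  right_inv x := by funext j; simp
  map_add' x y := rfl

lemma permEquiv_single (σ : Equiv.Perm (Fin d)) (i : Fin d) (c : ℤ) :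
    permEquiv σ (Pi.single i c) = Pi.single (σ.symm i) c := by
  funext j
  show (Pi.single i c : Fin d → ℤ) (σ j) = _
  rw [Pi.single_apply, Pi.single_apply]
  congr 1
  simp [Equiv.eq_symm_apply, eq_comm]

lemma permEquiv_symm_apply (σ : Equiv.Perm (Fin d)) (x : Fin d → ℤ) :
    (permEquiv σ).symm x = x ∘ σ.symm := rfl

lemma permEquiv_dir (σ : Equiv.Perm (Fin d)) (s : Fin d × Bool) :
    permEquiv σ (dir d s) = dir d (σ.symm s.1, s.2) := by
  obtain ⟨i, b⟩ := s
  cases b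
  · show permEquiv σ (-Pi.single i 1) = -Pi.single (σ.symm i) 1
    rw [map_neg, permEquiv_single]
  · show permEquiv σ (Pi.single i 1) = Pi.single (σ.symm i) 1
    rw [permEquiv_single]

lemma Phi_perm_Sel (σ : Equiv.Perm (Fin d)) : Phi (permEquiv σ) (Sel d) = Sel d :=
  Phi_Sel _ (Equiv.prodCongr σ.symm (Equiv.refl Bool)) (fun s => permEquiv_dir σ s)

lemma Phi_perm_Dm (σ : Equiv.Perm (Fin d)) (lam : Fin d → ℤ) :
    Phi (permEquiv σ) (Dm d lam)
      = ((Equiv.Perm.sign σ : ℤ) : AddMonoidAlgebra ℚ (Fin d → ℤ)) * Dm d lam := by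
  rw [Dm, AlgEquiv.map_det, AlgEquiv.mapMatrix_apply]
  have hM : (Matrix.of fun i j : Fin d =>
      laurentMono d (Pi.single i (lam j)) - laurentMono d (Pi.single i (-lam j))).map
        (Phi (permEquiv σ))
      = (Matrix.of fun i j : Fin d =>
      laurentMono d (Pi.single i (lam j)) - laurentMono d (Pi.single i (-lam j))).submatrix
        σ.symm id := by
    refine Matrix.ext fun i j => ?_
    show Phi (permEquiv σ) (laurentMono d (Pi.single i (lam j))
        - laurentMono d (Pi.single i (-lam j))) = _
    rw [map_sub]
    show Phi (permEquiv σ) (AddMonoidAlgebra.single (Pi.single i (lam j)) 1)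
        - Phi (permEquiv σ) (AddMonoidAlgebra.single (Pi.single i (-lam j)) 1) = _
    rw [Phi, AddMonoidAlgebra.domCongr_single, AddMonoidAlgebra.domCongr_single,
      permEquiv_single, permEquiv_single]
    rfl
  rw [hM, Matrix.det_permute, Equiv.Perm.sign_symm]

def flipEquiv (i0 : Fin d) : (Fin d → ℤ) ≃+ (Fin d → ℤ) where
  toFun x j := if j = i0 then -x j else x j
  invFun x j := if j = i0 then -x j else x j
  left_inv x := by funext j; rcases eq_or_ne j i0 with rfl | h <;> simp [*]
  right_inv x := by funext j; rcases eq_or_ne j i0 with rfl | h <;> simp [*]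
  map_add' x y := by funext j; rcases eq_or_ne j i0 with rfl | h <;> simp [*]; ring

lemma flipEquiv_symm_apply (i0 : Fin d) (x : Fin d → ℤ) :
    (flipEquiv i0).symm x = fun j => if j = i0 then -x j else x j := rfl

lemma flipEquiv_single (i0 i : Fin d) (c : ℤ) :
    flipEquiv i0 (Pi.single i c) = Pi.single i (if i = i0 then -c else c) := by
  funext j
  show (if j = i0 then -(Pi.single i c : Fin d → ℤ) j else (Pi.single i c : Fin d → ℤ) j)
      = (Pi.single i (if i = i0 then -c else c) : Fin d → ℤ) j
  simp only [Pi.single_apply]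
  split_ifs <;> simp_all

def flipTau (i0 : Fin d) : Fin d × Bool ≃ Fin d × Bool :=
  Function.Involutive.toPerm (fun s => (s.1, if s.1 = i0 then !s.2 else s.2)) (by
    rintro ⟨i, b⟩
    rcases eq_or_ne i i0 with rfl | h <;> simp [*])

lemma flipEquiv_dir (i0 : Fin d) (s : Fin d × Bool) :
    flipEquiv i0 (dir d s) = dir d (flipTau i0 s) := by
  obtain ⟨i, b⟩ := s
  rcases eq_or_ne i i0 with rfl | h
  · cases b
    · have ht : flipTau i (i, false) = (i, true) := by simp [flipTau, Function.Involutive.toPerm]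
      rw [ht]
      show flipEquiv i (-Pi.single i 1) = Pi.single i 1
      rw [map_neg, flipEquiv_single, if_pos rfl, pi_single_neg, neg_neg]
    · have ht : flipTau i (i, true) = (i, false) := by simp [flipTau, Function.Involutive.toPerm]
      rw [ht]
      show flipEquiv i (Pi.single i 1) = -Pi.single i 1
      rw [flipEquiv_single, if_pos rfl, pi_single_neg]
  · have ht : flipTau i0 (i, b) = (i, b) := by simp [flipTau, Function.Involutive.toPerm, h]
    rw [ht]
    cases b
    · show flipEquiv i0 (-Pi.single i 1) = -Pi.single i 1
      rw [map_neg, flipEquiv_single, if_neg h]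
    · show flipEquiv i0 (Pi.single i 1) = Pi.single i 1
      rw [flipEquiv_single, if_neg h]

lemma Phi_flip_Sel (i0 : Fin d) : Phi (flipEquiv i0) (Sel d) = Sel d :=
  Phi_Sel _ (flipTau i0) (fun s => flipEquiv_dir i0 s)

lemma Phi_flip_Dm (i0 : Fin d) (lam : Fin d → ℤ) :
    Phi (flipEquiv i0) (Dm d lam) = -Dm d lam := by
  rw [Dm, AlgEquiv.map_det, AlgEquiv.mapMatrix_apply]
  set M : Matrix (Fin d) (Fin d) (AddMonoidAlgebra ℚ (Fin d → ℤ)) :=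
    Matrix.of fun i j : Fin d =>
      laurentMono d (Pi.single i (lam j)) - laurentMono d (Pi.single i (-lam j)) with hMdef
  have hM : M.map (Phi (flipEquiv i0)) = M.updateRow i0 ((-1 : AddMonoidAlgebra ℚ (Fin d → ℤ)) • M i0) := by
    refine Matrix.ext fun i j => ?_
    show Phi (flipEquiv i0) (AddMonoidAlgebra.single (Pi.single i (lam j)) 1
        - AddMonoidAlgebra.single (Pi.single i (-lam j)) 1) = _
    rw [map_sub, Phi, AddMonoidAlgebra.domCongr_single, AddMonoidAlgebra.domCongr_single,
      flipEquiv_single, flipEquiv_single]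
    rcases eq_or_ne i i0 with rfl | h
    · rw [if_pos rfl, if_pos rfl, Matrix.updateRow_self]
      show _ = ((-1 : AddMonoidAlgebra ℚ (Fin d → ℤ)) • (laurentMono d (Pi.single i (lam j))
          - laurentMono d (Pi.single i (-lam j))))
      rw [smul_eq_mul, neg_one_mul, neg_sub, neg_neg]
      rfl
    · rw [if_neg h, if_neg h, Matrix.updateRow_ne h]
      rfl
  rw [hM, Matrix.det_updateRow_smul, Matrix.updateRow_eq_self, neg_one_mul]


def expvec (σ : Equiv.Perm (Fin d)) (t : Finset (Fin d)) (lam : Fin d → ℤ) : Fin d → ℤ :=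
  (∑ i ∈ t, Pi.single (σ i) (lam i)) + ∑ i ∈ tᶜ, Pi.single (σ i) (-lam i)

lemma expvec_apply (σ : Equiv.Perm (Fin d)) (t : Finset (Fin d)) (lam : Fin d → ℤ) (j : Fin d) :
    expvec σ t lam j = if σ.symm j ∈ t then lam (σ.symm j) else -lam (σ.symm j) := by
  classical
  have hiff : ∀ i, (j = σ i) ↔ (i = σ.symm j) := fun i => by
    constructor <;> intro h <;> simp [h]
  have e1 : (∑ i ∈ t, (Pi.single (σ i) (lam i) : Fin d → ℤ) j)
      = ∑ i ∈ t, if i = σ.symm j then lam i else 0 :=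
    Finset.sum_congr rfl fun i _ => by rw [Pi.single_apply, if_congr (hiff i) rfl rfl]
  have e2 : (∑ i ∈ tᶜ, (Pi.single (σ i) (-lam i) : Fin d → ℤ) j)
      = ∑ i ∈ tᶜ, if i = σ.symm j then -lam i else 0 :=
    Finset.sum_congr rfl fun i _ => by rw [Pi.single_apply, if_congr (hiff i) rfl rfl]
  rw [expvec, Pi.add_apply, Finset.sum_apply, Finset.sum_apply, e1, e2,
    Finset.sum_ite_eq' t (σ.symm j) (fun i => lam i),
    Finset.sum_ite_eq' tᶜ (σ.symm j) (fun i => -lam i)]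
  by_cases h : σ.symm j ∈ t
  · simp [h]
  · simp [h, Finset.mem_compl]

lemma expvec_one_univ (lam : Fin d → ℤ) : expvec 1 Finset.univ lam = lam := by
  funext j
  rw [expvec_apply, if_pos (Finset.mem_univ _)]
  rfl

lemma expvec_eq_lam {lam mu : Fin d → ℤ} (hlam : lam ∈ WeylChamber d)
    (hmono : ∀ i j : Fin d, i ≤ j → mu j ≤ mu i) (hpos : ∀ i, 0 ≤ mu i)
    (σ : Equiv.Perm (Fin d)) (t : Finset (Fin d)) (h : expvec σ t lam = mu) :
    σ = 1 ∧ t = Finset.univ ∧ mu = lam := by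
  have hval : ∀ j, mu j = if σ.symm j ∈ t then lam (σ.symm j) else -lam (σ.symm j) :=
    fun j => by rw [← h, expvec_apply]
  have ht : t = Finset.univ := by
    rw [Finset.eq_univ_iff_forall]
    intro i
    by_contra hi
    have h1 := hval (σ i)
    rw [Equiv.symm_apply_apply, if_neg hi] at h1
    have h2 := hpos (σ i)
    have h3 := hlam.2 i
    omega
  subst ht
  have hval' : ∀ j, mu j = lam (σ.symm j) := fun j => by
    have := hval j; rwa [if_pos (Finset.mem_univ _)] at this
  have hsm : StrictMono (fun j => σ.symm j) := by
    intro i j hij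
    have h1 : mu j ≤ mu i := hmono i j hij.le
    rw [hval' i, hval' j] at h1
    have h2 : σ.symm i ≤ σ.symm j := by
      by_contra hc
      push_neg at hc
      exact absurd (hlam.1 _ _ hc) (by omega)
    exact lt_of_le_of_ne h2 (fun he => absurd (σ.symm.injective he) hij.ne)
  have hid : (fun j => σ.symm j) = id := by
    have h1 : Set.range (fun j => σ.symm j) = Set.range (id : Fin d → Fin d) := by
      rw [Set.range_id]
      exact σ.symm.surjective.range_eq
    haveI hwf : WellFoundedLT (Fin d) := inferInstance
    exact (@StrictMono.range_inj (Fin d) (Fin d) _ _ hwf _ id hsm strictMono_id).1 h1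
  have hsymm : σ.symm = 1 := Equiv.ext fun j => congrFun hid j
  have hσ : σ = 1 := by rw [← Equiv.symm_symm σ, hsymm]; rfl
  refine ⟨hσ, rfl, funext fun j => ?_⟩
  rw [hval' j, hsymm]
  rfl

lemma Dm_apply {lam : Fin d → ℤ} (hlam : lam ∈ WeylChamber d)
    {mu : Fin d → ℤ} (hmono : ∀ i j : Fin d, i ≤ j → mu j ≤ mu i) (hpos : ∀ i, 0 ≤ mu i) :
    (Dm d lam).coeff mu = if mu = lam then 1 else 0 := by
  classical
  set M : Matrix (Fin d) (Fin d) (AddMonoidAlgebra ℚ (Fin d → ℤ)) :=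
    Matrix.of fun i j : Fin d =>
      laurentMono d (Pi.single i (lam j)) - laurentMono d (Pi.single i (-lam j)) with hMdef
  have hterm : ∀ σ : Equiv.Perm (Fin d),
      (∏ i : Fin d, M (σ i) i)
        = ∑ t : Finset (Fin d),
            AddMonoidAlgebra.single (expvec σ t lam) ((-1 : ℚ) ^ tᶜ.card) := by
    intro σ
    have hentry : ∀ i : Fin d, M (σ i) i
        = AddMonoidAlgebra.single (Pi.single (σ i) (lam i)) (1 : ℚ)
          + AddMonoidAlgebra.single (Pi.single (σ i) (-lam i)) (-1 : ℚ) := fun i => by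
      have h0 : M (σ i) i = AddMonoidAlgebra.single (Pi.single (σ i) (lam i)) (1 : ℚ)
          - AddMonoidAlgebra.single (Pi.single (σ i) (-lam i)) (1 : ℚ) := rfl
      rw [h0, sub_eq_add_neg, ← AddMonoidAlgebra.single_neg]
    rw [Finset.prod_congr rfl fun i _ => hentry i, Fintype.prod_add]
    refine Finset.sum_congr rfl fun t _ => ?_
    rw [AddMonoidAlgebra.prod_single, AddMonoidAlgebra.prod_single,
      AddMonoidAlgebra.single_mul_single, Finset.prod_const_one, one_mul,
      Finset.prod_const]
    rfl
  have happ : (Dm d lam).coeff mu = ∑ σ : Equiv.Perm (Fin d), (Equiv.Perm.sign σ : ℤ) •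
      ∑ t : Finset (Fin d), (if expvec σ t lam = mu then ((-1 : ℚ) ^ tᶜ.card) else 0) := by
    rw [Dm, ← hMdef, Matrix.det_apply, AddMonoidAlgebra.coeff_sum, Finsupp.finset_sum_apply]
    refine Finset.sum_congr rfl fun σ _ => ?_
    rw [Units.smul_def, AddMonoidAlgebra.coeff_smul, Finsupp.smul_apply, hterm σ,
      AddMonoidAlgebra.coeff_sum, Finsupp.finset_sum_apply]
    congr 1
    exact Finset.sum_congr rfl fun t _ => by rw [AddMonoidAlgebra.coeff_single, Finsupp.single_apply]
  rw [happ]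
  by_cases hmu : mu = lam
  · rw [if_pos hmu]
    rw [Finset.sum_eq_single 1]
    · rw [Finset.sum_eq_single Finset.univ]
      · rw [if_pos (by rw [expvec_one_univ, hmu]), Finset.compl_univ, Finset.card_empty,
          pow_zero, Equiv.Perm.sign_one]
        norm_num
      · intro t _ htne
        rw [if_neg]
        intro hcon
        exact htne (expvec_eq_lam hlam hmono hpos 1 t hcon).2.1
      · intro hcon
        exact absurd (Finset.mem_univ _) hcon
    · intro σ _ hσne
      have : ∀ t : Finset (Fin d), (if expvec σ t lam = mu then ((-1 : ℚ) ^ tᶜ.card) else 0) = 0 := by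
        intro t
        rw [if_neg]
        intro hcon
        exact hσne (expvec_eq_lam hlam hmono hpos σ t hcon).1
      rw [Finset.sum_congr rfl fun t _ => this t, Finset.sum_const_zero, smul_zero]
    · intro hcon
      exact absurd (Finset.mem_univ _) hcon
  · rw [if_neg hmu]
    have : ∀ σ : Equiv.Perm (Fin d), ∀ t : Finset (Fin d),
        (if expvec σ t lam = mu then ((-1 : ℚ) ^ tᶜ.card) else 0) = 0 := by
      intro σ t
      rw [if_neg]
      intro hcon
      exact hmu (expvec_eq_lam hlam hmono hpos σ t hcon).2.2
    refine Finset.sum_eq_zero fun σ _ => ?_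
    rw [Finset.sum_congr rfl fun t _ => this σ t, Finset.sum_const_zero, smul_zero]


lemma coeff_vanish_on_wall {lam mu : Fin d → ℤ}
    (hmono : ∀ i j : Fin d, i ≤ j → mu j ≤ mu i) (hpos : ∀ i, 0 ≤ mu i)
    (hnW : mu ∉ WeylChamber d) (n : ℕ) :
    (Dm d lam * Sel d ^ n).coeff mu = 0 := by
  have h1 : ¬((∀ i j : Fin d, i < j → mu j < mu i) ∧ ∀ i, 0 < mu i) := hnW
  rw [not_and_or] at h1
  rcases h1 with h | h
  · push_neg at h
    obtain ⟨i, j, hij, hle⟩ := h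
    have heq : mu i = mu j := le_antisymm hle (hmono i j hij.le)
    refine coeff_zero_of_anti (permEquiv (Equiv.swap i j)) ?_ (Phi_perm_Sel _) ?_
    · rw [Phi_perm_Dm, Equiv.Perm.sign_swap hij.ne]
      push_cast
      ring
    · rw [permEquiv_symm_apply]
      funext k
      show mu ((Equiv.swap i j).symm k) = mu k
      rw [Equiv.symm_swap, Equiv.swap_apply_def]
      split_ifs with h1 h2
      · rw [h1, heq]
      · rw [h2, heq]
      · rfl
  · push_neg at h
    obtain ⟨i, hle⟩ := h
    have heq : mu i = 0 := le_antisymm hle (hpos i)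
    refine coeff_zero_of_anti (flipEquiv i) (Phi_flip_Dm i lam) (Phi_flip_Sel i) ?_
    rw [flipEquiv_symm_apply]
    funext k
    rcases eq_or_ne k i with rfl | hk
    · simp [heq]
    · simp [hk]

lemma closed_sub_dir {mu : Fin d → ℤ} (hmu : mu ∈ WeylChamber d) (s : Fin d × Bool) :
    (∀ i j : Fin d, i ≤ j → (mu - dir d s) j ≤ (mu - dir d s) i)
      ∧ ∀ i, 0 ≤ (mu - dir d s) i := by
  obtain ⟨i0, b⟩ := s
  have hself : (mu - dir d (i0, b)) i0 = mu i0 - (if b then 1 else -1) := by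
    rw [Pi.sub_apply, dir_apply_self]
  have hne : ∀ j, j ≠ i0 → (mu - dir d (i0, b)) j = mu j := fun j hj => by
    rw [Pi.sub_apply, dir_apply_ne i0 b j hj, sub_zero]
  constructor
  · intro i j hij
    rcases eq_or_lt_of_le hij with heq | hlt
    · rw [heq]
    have hstrict := hmu.1 i j hlt
    rcases eq_or_ne i i0 with rfl | hi
    · rw [hne j (by exact fun hj => absurd (hj ▸ hlt) (lt_irrefl _)), hself]
      split_ifs <;> omega
    · rcases eq_or_ne j i0 with rfl | hj
      · rw [hne i hi, hself]
        split_ifs <;> omega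
      · rw [hne i hi, hne j hj]
        omega
  · intro i
    rcases eq_or_ne i i0 with rfl | hi
    · have := hmu.2 i
      rw [hself]
      split_ifs <;> omega
    · rw [hne i hi]
      exact (hmu.2 i).le


end OscAux

/-- For `λ ∈ W^d`, `μ` in the closure of `W^d` and `n ≥ 0`, the coefficient of `x^μ`
in `det( x_i^{λ_j} - x_i^{-λ_j} )_{1 ≤ i,j ≤ d} · ( Σ_i (x_i + x_i⁻¹) )^n` equals the
number `b_n(λ;μ)` of Weyl oscillating lattice walks of length `n` from `λ` to `μ`. -/
theorem coeff_laurent_eq_oscWalkCount (d : ℕ) (hd : 1 ≤ d) (lam : Fin d → ℤ)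
    (hlam : lam ∈ WeylChamber d) (n : ℕ)
    (mu : Fin d → ℤ) (hmono : ∀ i j : Fin d, i ≤ j → mu j ≤ mu i)
    (hpos : ∀ i, 0 ≤ mu i) :
    (AddMonoidAlgebra.coeff (Matrix.det (Matrix.of fun i j : Fin d =>
        laurentMono d (Pi.single i (lam j)) - laurentMono d (Pi.single i (-lam j))) *
      (∑ i : Fin d,
        (laurentMono d (Pi.single i 1) + laurentMono d (Pi.single i (-1)))) ^ n))
      mu = (oscWalkCount d n lam mu : ℚ) := by
  show (OscAux.Dm d lam * OscAux.Sel d ^ n).coeff mu = (oscWalkCount d n lam mu : ℚ)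
  induction n generalizing mu hmono hpos with
  | zero =>
    rw [pow_zero, mul_one, OscAux.Dm_apply hlam hmono hpos, OscAux.count_zero hlam mu]
    split_ifs <;> simp
  | succ n ih =>
    by_cases hW : mu ∈ WeylChamber d
    · rw [pow_succ, ← mul_assoc, OscAux.mul_Sel_apply, OscAux.count_succ hW, Nat.cast_sum]
      refine Finset.sum_congr rfl fun s _ => ?_
      exact ih (mu - OscAux.dir d s) (OscAux.closed_sub_dir hW s).1
        (OscAux.closed_sub_dir hW s).2
    · rw [OscAux.coeff_vanish_on_wall hmono hpos hW, OscAux.count_vanish hW (n + 1) lam]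
      simp
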